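/- The sum over all permutations σ of {1,...,n} of 1/(u_{σ(1)}(u_{σ(1)}+u_{σ(2)})···(u_{σ(1)}+···+u_{σ(n)})) equals 1/(u_1 u_2 ··· u_n). -/

import Mathlib

open Finset

private def glue {n : ℕ} (p : Fin (n + 1)) (e : Equiv.Perm (Fin n)) :
    Equiv.Perm (Fin (n + 1)) :=
  (finSuccEquiv' (Fin.last n)).trans ((Equiv.optionCongr e).trans (finSuccEquiv' p).symm)

private lemma glue_last {n : ℕ} (p : Fin (n + 1)) (e : Equiv.Perm (Fin n)) :
    glue p e (Fin.last n) = p := by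
  simp [glue]

private lemma glue_castSucc {n : ℕ} (p : Fin (n + 1)) (e : Equiv.Perm (Fin n)) (i : Fin n) :
    glue p e (Fin.castSucc i) = p.succAbove (e i) := by
  simp [glue, finSuccEquiv'_last_apply_castSucc]

/-- Decomposition of a permutation of `Fin (n+1)` by its value at `Fin.last n`. -/
private def permLast (n : ℕ) : Fin (n + 1) × Equiv.Perm (Fin n) ≃ Equiv.Perm (Fin (n + 1)) where
  toFun pe := glue pe.1 pe.2
  invFun σ := (σ (Fin.last n),
    Equiv.removeNone ((finSuccEquiv' (Fin.last n)).symm.trans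
      (σ.trans (finSuccEquiv' (σ (Fin.last n))))))
  left_inv := by
    rintro ⟨p, e⟩
    have hlast : glue p e (Fin.last n) = p := glue_last p e
    refine Prod.ext hlast ?_
    refine Equiv.ext fun i => Option.some_injective _ ?_
    rw [Equiv.removeNone_some]
    · simp [hlast, glue_castSucc]
    · refine ⟨e i, ?_⟩
      simp [hlast, glue_castSucc]
  right_inv := by
    intro σ
    set p := σ (Fin.last n) with hp
    set σ' := (finSuccEquiv' (Fin.last n)).symm.trans (σ.trans (finSuccEquiv' p)) with hσ'
    have hnone : σ' none = none := by simp [hσ', ← hp]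
    refine Equiv.ext fun x => ?_
    refine Fin.lastCases ?_ (fun i => ?_) x
    · simpa using glue_last p _
    · have hex : ∃ x', σ' (some i) = some x' := by
        rcases h : σ' (some i) with _ | y
        · exact absurd (σ'.injective (h.trans hnone.symm)) (by simp)
        · exact ⟨y, rfl⟩
      have h1 : some (Equiv.removeNone σ' i) = σ' (some i) := Equiv.removeNone_some _ hex
      have h2 : σ' (some i) = finSuccEquiv' p (σ (Fin.castSucc i)) := by
        simp [hσ', finSuccEquiv'_last_apply_castSucc]
      have := congrArg (finSuccEquiv' p).symm (h1.trans h2)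
      simpa [glue_castSucc] using this
    
private lemma Iic_castSucc_eq {n : ℕ} (i : Fin n) :
    Finset.Iic (Fin.castSucc i) = (Finset.Iic i).map Fin.castSuccEmb := by
  ext a
  simp only [mem_Iic, mem_map]
  constructor
  · intro h
    have ha : a.val ≤ i.val := h
    exact ⟨⟨a.val, lt_of_le_of_lt ha i.isLt⟩, ha, Fin.ext rfl⟩
  · rintro ⟨m, hm, rfl⟩
    exact hm

/-- The sum over all permutations `σ` of `1/(u_{σ(1)}(u_{σ(1)}+u_{σ(2)})⋯(u_{σ(1)}+⋯+u_{σ(n)}))`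
equals `1/(u_1 u_2 ⋯ u_n)`, in any field in which all the partial sums are nonzero. -/
theorem sum_perm_mould_eq {K : Type*} [Field K] (n : ℕ) (u : Fin n → K)
    (hne : ∀ (σ : Equiv.Perm (Fin n)) (k : Fin n), (∑ j ∈ Finset.Iic k, u (σ j)) ≠ 0) :
    ∑ σ : Equiv.Perm (Fin n), ∏ k : Fin n, (∑ j ∈ Finset.Iic k, u (σ j))⁻¹ =
      ∏ i : Fin n, (u i)⁻¹ := by
  induction n with
  | zero => simp
  | succ n ih =>
    have hIicLast : Finset.Iic (Fin.last n) = Finset.univ := by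
      ext a; simp [Fin.le_last]
    set T : K := ∑ i, u i with hT
    have hT0 : T ≠ 0 := by
      have h := hne 1 (Fin.last n)
      simpa [hIicLast] using h
    have hu0 : ∀ p : Fin (n + 1), u p ≠ 0 := by
      intro p
      have h := hne (Equiv.swap 0 p) 0
      have hIic0 : Finset.Iic (0 : Fin (n + 1)) = {0} := by
        ext a; simp [Fin.le_zero_iff]
      simpa [hIic0] using h
    -- the term for a glued permutation
    have hterm : ∀ (p : Fin (n + 1)) (e : Equiv.Perm (Fin n)),
        (∏ k : Fin (n + 1), (∑ j ∈ Finset.Iic k, u (glue p e j))⁻¹) =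
          (∏ k : Fin n, (∑ j ∈ Finset.Iic k, u (p.succAbove (e j)))⁻¹) * T⁻¹ := by
      intro p e
      rw [Fin.prod_univ_castSucc]
      congr 1
      · refine Finset.prod_congr rfl fun k _ => ?_
        rw [Iic_castSucc_eq, Finset.sum_map]
        congr 1
        refine Finset.sum_congr rfl fun m _ => ?_
        rw [Fin.coe_castSuccEmb]  -- may need adjusting
        rw [glue_castSucc]
      · rw [hIicLast]
        rw [Equiv.sum_comp (glue p e) u]
    -- partial sums of the glued pieces are nonzero
    have hvne : ∀ (p : Fin (n + 1)) (e : Equiv.Perm (Fin n)) (k : Fin n),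
        (∑ j ∈ Finset.Iic k, u (p.succAbove (e j))) ≠ 0 := by
      intro p e k
      have h := hne (glue p e) (Fin.castSucc k)
      rw [Iic_castSucc_eq, Finset.sum_map] at h
      refine fun h0 => h ?_
      rw [← h0]
      refine Finset.sum_congr rfl fun m _ => ?_
      rw [Fin.coe_castSuccEmb, glue_castSucc]
    calc ∑ σ : Equiv.Perm (Fin (n + 1)), ∏ k : Fin (n + 1),
            (∑ j ∈ Finset.Iic k, u (σ j))⁻¹
        = ∑ pe : Fin (n + 1) × Equiv.Perm (Fin n), ∏ k : Fin (n + 1),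
            (∑ j ∈ Finset.Iic k, u (permLast n pe j))⁻¹ :=
          (Equiv.sum_comp (permLast n) _).symm
      _ = ∑ p : Fin (n + 1), ∑ e : Equiv.Perm (Fin n),
            (∏ k : Fin n, (∑ j ∈ Finset.Iic k, u (p.succAbove (e j)))⁻¹) * T⁻¹ := by
          rw [Fintype.sum_prod_type]
          exact Finset.sum_congr rfl fun p _ => Finset.sum_congr rfl fun e _ => hterm p e
      _ = ∑ p : Fin (n + 1), (∏ k : Fin n, (u (p.succAbove k))⁻¹) * T⁻¹ := by
          refine Finset.sum_congr rfl fun p _ => ?_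
          rw [← Finset.sum_mul]
          rw [ih (fun m => u (p.succAbove m)) (fun e k => hvne p e k)]
      _ = ∑ p : Fin (n + 1), u p * (∏ i : Fin (n + 1), (u i)⁻¹) * T⁻¹ := by
          refine Finset.sum_congr rfl fun p _ => ?_
          congr 1
          have h := Fin.prod_univ_succAbove (fun i => (u i)⁻¹) p
          rw [h, ← mul_assoc, mul_inv_cancel₀ (hu0 p), one_mul]
      _ = ∏ i : Fin (n + 1), (u i)⁻¹ := by
          rw [← Finset.sum_mul, ← Finset.sum_mul, ← hT]
          field_simp
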